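/- Let σ > 0 and η > 0 be real numbers, and let (M_n) and (K_n) be sequences with M_n → ∞ and K_n/M_n → ∞ as n → ∞ (M_n real positive, K_n natural numbers). Then (1/M_n) Σ_{j=1}^{K_n} (1/2)(σ² + η²π²(j/M_n)²)^{−2} → 1/(8ησ³) as n → ∞. -/

import Mathlib

open Real Finset Filter

namespace FisherAux

/-- The integrand. -/
noncomputable def f (σ a x : ℝ) : ℝ := (1/2) / (σ^2 + a^2 * x^2)^2

/-- An antiderivative of `f`. -/
noncomputable def F (σ a x : ℝ) : ℝ :=
  (1/(4*σ^2)) * (x / (σ^2 + a^2 * x^2)) + (1/(4*σ^3*a)) * Real.arctan (a * x / σ)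

lemma D_pos {σ : ℝ} (hσ : 0 < σ) (a x : ℝ) : 0 < σ^2 + a^2 * x^2 := by positivity

lemma hasDerivAt_F {σ a : ℝ} (hσ : 0 < σ) (ha : 0 < a) (x : ℝ) :
    HasDerivAt (F σ a) (f σ a x) x := by
  have hD : σ^2 + a^2 * x^2 ≠ 0 := (D_pos hσ a x).ne'
  have hσ' : σ ≠ 0 := hσ.ne'
  have ha' : a ≠ 0 := ha.ne'
  have hden : HasDerivAt (fun x : ℝ => σ^2 + a^2 * x^2) (a^2 * (2*x)) x := by
    have := ((hasDerivAt_pow 2 x).const_mul (a^2)).const_add (σ^2)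
    simpa using this
  have h1 : HasDerivAt (fun x : ℝ => x / (σ^2 + a^2 * x^2))
      ((1 * (σ^2 + a^2 * x^2) - x * (a^2 * (2*x))) / (σ^2 + a^2 * x^2)^2) x :=
    (hasDerivAt_id x).div hden hD
  have hlin : HasDerivAt (fun x : ℝ => a * x / σ) (a / σ) x := by
    have := ((hasDerivAt_id x).const_mul a).div_const σ
    simpa using this
  have h2 : HasDerivAt (fun x : ℝ => Real.arctan (a * x / σ))
      ((1 + (a * x / σ)^2)⁻¹ * (a / σ)) x := by
    have := (Real.hasDerivAt_arctan (a * x / σ)).comp x hlin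
    simpa [mul_comm, Function.comp_def] using this
  have h := (h1.const_mul (1/(4*σ^2))).add (h2.const_mul (1/(4*σ^3*a)))
  have hne : 1 + (a * x / σ)^2 ≠ 0 := by positivity
  apply h.congr_deriv
  unfold f
  field_simp
  ring

lemma f_cont (σ a : ℝ) (hσ : 0 < σ) : Continuous (f σ a) := by
  unfold f
  exact continuous_const.div (by continuity) (fun x => by positivity)

lemma f_anti {σ a x y : ℝ} (hσ : 0 < σ) (hx : 0 ≤ x) (hxy : x ≤ y) :
    f σ a y ≤ f σ a x := by
  unfold f
  have h1 : 0 < σ^2 + a^2 * x^2 := D_pos hσ a x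
  have hxy2 : x^2 ≤ y^2 := by nlinarith
  have hle : σ^2 + a^2 * x^2 ≤ σ^2 + a^2 * y^2 := by nlinarith [sq_nonneg a]
  have h2 : (σ^2 + a^2 * x^2)^2 ≤ (σ^2 + a^2 * y^2)^2 := pow_le_pow_left₀ h1.le hle 2
  apply div_le_div_of_nonneg_left (by norm_num) (by positivity) h2

lemma integral_eq {σ a : ℝ} (hσ : 0 < σ) (ha : 0 < a) (b c : ℝ) :
    ∫ x in b..c, f σ a x = F σ a c - F σ a b :=
  intervalIntegral.integral_eq_sub_of_hasDerivAt
    (fun x _ => hasDerivAt_F hσ ha x)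
    ((f_cont σ a hσ).intervalIntegrable b c)

lemma step_le {σ a : ℝ} (hσ : 0 < σ) (ha : 0 < a) {b c : ℝ} (hb : 0 ≤ b) (hbc : b ≤ c) :
    (c - b) * f σ a c ≤ F σ a c - F σ a b := by
  rw [← integral_eq hσ ha]
  have : (c - b) * f σ a c = ∫ _ in b..c, f σ a c := by
    rw [intervalIntegral.integral_const, smul_eq_mul]
  rw [this]
  apply intervalIntegral.integral_mono_on hbc (intervalIntegrable_const)
    ((f_cont σ a hσ).intervalIntegrable b c)
  intro x hx
  exact f_anti hσ (hb.trans hx.1) hx.2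

lemma le_step {σ a : ℝ} (hσ : 0 < σ) (ha : 0 < a) {b c : ℝ} (hb : 0 ≤ b) (hbc : b ≤ c) :
    F σ a c - F σ a b ≤ (c - b) * f σ a b := by
  rw [← integral_eq hσ ha]
  have : (c - b) * f σ a b = ∫ _ in b..c, f σ a b := by
    rw [intervalIntegral.integral_const, smul_eq_mul]
  rw [this]
  apply intervalIntegral.integral_mono_on hbc
    ((f_cont σ a hσ).intervalIntegrable b c) (intervalIntegrable_const)
  intro x hx
  exact f_anti hσ hb hx.1

lemma F_zero {σ a : ℝ} : F σ a 0 = 0 := by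
  simp [F]

lemma F_cont {σ a : ℝ} (hσ : 0 < σ) : Continuous (F σ a) := by
  unfold F
  apply Continuous.add
  · exact continuous_const.mul (continuous_id.div (by continuity) (fun x => (D_pos hσ a x).ne'))
  · exact continuous_const.mul (Real.continuous_arctan.comp (by continuity))

lemma F_tendsto_atTop {σ a : ℝ} (hσ : 0 < σ) (ha : 0 < a) :
    Tendsto (F σ a) atTop (nhds (π / (8 * σ^3 * a))) := by
  have h1 : Tendsto (fun t : ℝ => t / (σ^2 + a^2 * t^2)) atTop (nhds 0) := by
    have hub : Tendsto (fun t : ℝ => 1 / (a^2 * t)) atTop (nhds 0) := by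
      apply Tendsto.div_atTop tendsto_const_nhds
      exact (tendsto_id.const_mul_atTop (by positivity))
    apply tendsto_of_tendsto_of_tendsto_of_le_of_le' tendsto_const_nhds hub
    · filter_upwards [eventually_gt_atTop 0] with t ht
      positivity
    · filter_upwards [eventually_gt_atTop 0] with t ht
      have h2 : a^2 * t^2 ≤ σ^2 + a^2 * t^2 := by nlinarith
      calc t / (σ^2 + a^2 * t^2) ≤ t / (a^2 * t^2) := by
            gcongr
        _ = 1 / (a^2 * t) := by
            field_simp
  have h2 : Tendsto (fun t : ℝ => Real.arctan (a * t / σ)) atTop (nhds (π/2)) := by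
    have hl : Tendsto (fun t : ℝ => a * t / σ) atTop atTop :=
      (tendsto_id.const_mul_atTop ha).atTop_div_const hσ
    exact (Real.tendsto_arctan_atTop.mono_right nhdsWithin_le_nhds).comp hl
  have h3 := ((h1.const_mul (1/(4*σ^2))).add (h2.const_mul (1/(4*σ^3*a))))
  have heq : 1/(4*σ^2) * 0 + 1/(4*σ^3*a) * (π/2) = π / (8 * σ^3 * a) := by
    rw [mul_zero, zero_add, div_mul_eq_mul_div, one_mul, div_div]
    congr 1
    ring
  rw [heq] at h3
  exact h3

end FisherAux

open FisherAux in
/-- Riemann-sum convergence of the normalized sum of local Fisher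
informations: if `M_n → ∞` and `K_n / M_n → ∞`, then
`(1/M_n) Σ_{j=1}^{K_n} (1/2)(σ² + η²π²(j/M_n)²)⁻² → 1/(8ησ³)`. -/
theorem fisher_info_riemann_sum_limit (σ η : ℝ) (hσ : 0 < σ) (hη : 0 < η)
    (M : ℕ → ℝ) (K : ℕ → ℕ) (hM : ∀ n, 0 < M n)
    (hMtop : Filter.Tendsto M Filter.atTop Filter.atTop)
    (hKM : Filter.Tendsto (fun n => (K n : ℝ) / M n) Filter.atTop Filter.atTop) :
    Filter.Tendsto
      (fun n => (1 / M n) *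
        ∑ j ∈ Finset.Icc 1 (K n),
          (1/2) / (σ^2 + η^2 * Real.pi^2 * ((j : ℝ) / M n)^2)^2)
      Filter.atTop (nhds (1 / (8 * η * σ^3))) := by
  set a : ℝ := η * π with ha_def
  have hπ : 0 < π := Real.pi_pos
  have ha : 0 < a := by positivity
  -- rewrite the summand as f σ a (j / M n)
  have hsum : ∀ n, (1 / M n) *
      ∑ j ∈ Finset.Icc 1 (K n),
        (1/2) / (σ^2 + η^2 * Real.pi^2 * ((j : ℝ) / M n)^2)^2
      = ∑ i ∈ Finset.range (K n), (1 / M n) * f σ a (((i : ℝ) + 1) / M n) := by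
    intro n
    rw [Finset.mul_sum, ← Finset.Ico_add_one_right_eq_Icc, Finset.sum_Ico_eq_sum_range]
    apply Finset.sum_congr rfl
    intro i _
    unfold f
    push_cast
    rw [ha_def]
    ring_nf
  -- upper bound
  have hub : ∀ n, (∑ i ∈ Finset.range (K n), (1 / M n) * f σ a (((i : ℝ) + 1) / M n))
      ≤ F σ a ((K n : ℝ) / M n) := by
    intro n
    have hMn := hM n
    calc ∑ i ∈ Finset.range (K n), (1 / M n) * f σ a (((i : ℝ) + 1) / M n)
        ≤ ∑ i ∈ Finset.range (K n), (F σ a (((i : ℝ) + 1) / M n) - F σ a ((i : ℝ) / M n)) := by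
          apply Finset.sum_le_sum
          intro i _
          have hb : (0 : ℝ) ≤ (i : ℝ) / M n := by positivity
          have hbc : (i : ℝ) / M n ≤ ((i : ℝ) + 1) / M n := by
            gcongr; linarith
          have := step_le hσ ha hb hbc
          have hd : ((i : ℝ) + 1) / M n - (i : ℝ) / M n = 1 / M n := by
            field_simp
            ring
          rwa [hd] at this
      _ = F σ a ((K n : ℝ) / M n) - F σ a 0 := by
          have := Finset.sum_range_sub (fun i : ℕ => F σ a ((i : ℝ) / M n)) (K n)
          simpa using this
      _ = F σ a ((K n : ℝ) / M n) := by rw [F_zero, sub_zero]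
  -- lower bound
  have hlb : ∀ n, F σ a (((K n : ℝ) + 1) / M n) - F σ a (1 / M n)
      ≤ ∑ i ∈ Finset.range (K n), (1 / M n) * f σ a (((i : ℝ) + 1) / M n) := by
    intro n
    have hMn := hM n
    calc F σ a (((K n : ℝ) + 1) / M n) - F σ a (1 / M n)
        = ∑ i ∈ Finset.range (K n),
            (F σ a (((i : ℝ) + 1 + 1) / M n) - F σ a (((i : ℝ) + 1) / M n)) := by
          have h := Finset.sum_range_sub (fun i : ℕ => F σ a (((i : ℝ) + 1) / M n)) (K n)
          push_cast at h
          rw [h]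
          norm_num
      _ ≤ ∑ i ∈ Finset.range (K n), (1 / M n) * f σ a (((i : ℝ) + 1) / M n) := by
          apply Finset.sum_le_sum
          intro i _
          have hb : (0 : ℝ) ≤ ((i : ℝ) + 1) / M n := by positivity
          have hbc : ((i : ℝ) + 1) / M n ≤ ((i : ℝ) + 1 + 1) / M n := by
            gcongr; linarith
          have := le_step hσ ha hb hbc
          have hd : ((i : ℝ) + 1 + 1) / M n - ((i : ℝ) + 1) / M n = 1 / M n := by
            field_simp
            ring
          rwa [hd] at this
  -- the limit value
  have hL : π / (8 * σ^3 * a) = 1 / (8 * η * σ^3) := by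
    rw [ha_def]
    field_simp
  -- limit of the upper bound
  have hupper : Tendsto (fun n => F σ a ((K n : ℝ) / M n)) atTop
      (nhds (1 / (8 * η * σ^3))) := by
    rw [← hL]
    exact (F_tendsto_atTop hσ ha).comp hKM
  -- limit of the lower bound
  have hK1M : Tendsto (fun n => ((K n : ℝ) + 1) / M n) atTop atTop := by
    apply tendsto_atTop_mono _ hKM
    intro n
    gcongr
    · exact (hM n).le
    · linarith
  have h1M : Tendsto (fun n => 1 / M n) atTop (nhds 0) :=
    tendsto_const_nhds.div_atTop hMtop
  have hF1M : Tendsto (fun n => F σ a (1 / M n)) atTop (nhds 0) := by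
    have h := ((F_cont (σ := σ) (a := a) hσ).tendsto 0).comp h1M
    simpa [F_zero, Function.comp_def] using h
  have hlower : Tendsto (fun n => F σ a (((K n : ℝ) + 1) / M n) - F σ a (1 / M n)) atTop
      (nhds (1 / (8 * η * σ^3))) := by
    have := (((F_tendsto_atTop hσ ha).comp hK1M).sub hF1M)
    rw [hL] at this
    simpa using this
  -- squeeze
  simp only [hsum]
  exact tendsto_of_tendsto_of_tendsto_of_le_of_le hlower hupper hlb hub
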